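/- Characterization of 𝕄₂(P): a kn×kn matrix pencil ℒ(λ) belongs to 𝕄₂(P) with ansatz vector v ∈ ℝ^k (i.e., (Φ_k(λ)^T ⊗ I_n)ℒ(λ) = v^T ⊗ P(λ)) if and only if ℒ(λ) = F_Φ^P(λ)^𝓑 · [v^T⊗I_n; B^𝓑] for some matrix B ∈ ℝ^{kn×(k−1)n}, where [v^T⊗I_n; B^𝓑] denotes the kn×kn matrix whose first n rows form v^T⊗I_n and whose remaining (k−1)n rows form the block transpose B^𝓑 of B. This holds whether P is regular or singular. -/

import Mathlib

open Polynomial Matrix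

noncomputable section

/-- `Φ_k(λ) ⊗ I_n` as a `kn × n` polynomial matrix: its `i`-th block row (0-based)
is `φ_{k-1-i}(λ) I_n`. -/
def PhiMat (n k : ℕ) (φ : ℕ → Polynomial ℝ) :
    Matrix (Fin k × Fin n) (Fin n) (Polynomial ℝ) :=
  Matrix.of fun p s => if p.2 = s then φ (k - 1 - p.1.val) else 0

/-- The matrix polynomial `P(λ) = Σ_{i=0}^k P_i φ_i(λ)`. -/
def matP (n k : ℕ) (φ : ℕ → Polynomial ℝ) (Pm : ℕ → Matrix (Fin n) (Fin n) ℝ) :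
    Matrix (Fin n) (Fin n) (Polynomial ℝ) :=
  Matrix.of fun r s => ∑ i ∈ Finset.range (k + 1), C (Pm i r s) * φ i

/-- `v ⊗ Q` as a `kn × n` polynomial matrix. -/
def vKron (n k : ℕ) (v : Fin k → ℝ) (Q : Matrix (Fin n) (Fin n) (Polynomial ℝ)) :
    Matrix (Fin k × Fin n) (Fin n) (Polynomial ℝ) :=
  Matrix.of fun p s => C (v p.1) * Q p.2 s

/-- `v^T ⊗ Q` as an `n × kn` polynomial matrix. -/
def vKronRow (n k : ℕ) (v : Fin k → ℝ) (Q : Matrix (Fin n) (Fin n) (Polynomial ℝ)) :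
    Matrix (Fin n) (Fin k × Fin n) (Polynomial ℝ) :=
  Matrix.of fun s q => C (v q.1) * Q s q.2

/-- A matrix pencil: a matrix polynomial each of whose entries has degree at most `1`. -/
def IsPencil {m m' : Type*} (L : Matrix m m' (Polynomial ℝ)) : Prop :=
  ∀ p q, (L p q).degree ≤ 1

/-- `ℒ(λ) ∈ 𝕄₁(P)` with ansatz vector `v`, i.e. `ℒ(λ)(Φ_k(λ) ⊗ I_n) = v ⊗ P(λ)`. -/
def Ansatz1 (n k : ℕ) (φ : ℕ → Polynomial ℝ) (Pm : ℕ → Matrix (Fin n) (Fin n) ℝ)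
    (L : Matrix (Fin k × Fin n) (Fin k × Fin n) (Polynomial ℝ)) (v : Fin k → ℝ) : Prop :=
  L * PhiMat n k φ = vKron n k v (matP n k φ Pm)

/-- `ℒ(λ) ∈ 𝕄₂(P)` with ansatz vector `w`, i.e. `(Φ_k(λ)^T ⊗ I_n) ℒ(λ) = w^T ⊗ P(λ)`. -/
def Ansatz2 (n k : ℕ) (φ : ℕ → Polynomial ℝ) (Pm : ℕ → Matrix (Fin n) (Fin n) ℝ)
    (L : Matrix (Fin k × Fin n) (Fin k × Fin n) (Polynomial ℝ)) (w : Fin k → ℝ) : Prop :=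
  (PhiMat n k φ)ᵀ * L = vKronRow n k w (matP n k φ Pm)

/-- The anchor pencil `F_Φ^P(λ) = [m_Φ^P(λ); M_Φ(λ)]`. -/
def FPhi (n k : ℕ) (a b c : ℕ → ℝ) (Pm : ℕ → Matrix (Fin n) (Fin n) ℝ) :
    Matrix (Fin k × Fin n) (Fin k × Fin n) (Polynomial ℝ) :=
  Matrix.of fun p q =>
    if p.1.val = 0 then
      -- the block row m_Φ^P(λ)
      if q.1.val = 0 then
        C ((a (k - 1))⁻¹) * (X - C (b (k - 1))) * C (Pm k p.2 q.2) + C (Pm (k - 1) p.2 q.2)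
      else if q.1.val = 1 then
        C (Pm (k - 2) p.2 q.2) - C (c (k - 1) / a (k - 1)) * C (Pm k p.2 q.2)
      else
        C (Pm (k - 1 - q.1.val) p.2 q.2)
    else
      -- the block rows M_Φ(λ) = M_Φ^⋆(λ) ⊗ I_n
      (if q.1.val + 1 = p.1.val then -C (a (k - 1 - p.1.val))
       else if q.1.val = p.1.val then X - C (b (k - 1 - p.1.val))
       else if q.1.val = p.1.val + 1 then -C (c (k - 1 - p.1.val))
       else 0) * (if p.2 = q.2 then 1 else 0)

/-- The `kn × kn` real matrix `[v ⊗ I_n, B]`: first `n` columns form `v ⊗ I_n`,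
the remaining `(k-1)n` columns form `B`. -/
def extCols (n k : ℕ) (v : Fin k → ℝ)
    (B : Matrix (Fin k × Fin n) (Fin (k - 1) × Fin n) ℝ) :
    Matrix (Fin k × Fin n) (Fin k × Fin n) ℝ :=
  Matrix.of fun p q =>
    if h : q.1.val = 0 then (if p.2 = q.2 then v p.1 else 0)
    else B p (⟨q.1.val - 1, by have := q.1.isLt; omega⟩, q.2)

/-- The `kn × kn` real matrix `[w^T ⊗ I_n; B]`: first `n` rows form `w^T ⊗ I_n`,
the remaining `(k-1)n` rows form `B`. -/
def extRows (n k : ℕ) (w : Fin k → ℝ)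
    (B : Matrix (Fin (k - 1) × Fin n) (Fin k × Fin n) ℝ) :
    Matrix (Fin k × Fin n) (Fin k × Fin n) ℝ :=
  Matrix.of fun p q =>
    if h : p.1.val = 0 then (if p.2 = q.2 then w q.1 else 0)
    else B (⟨p.1.val - 1, by have := p.1.isLt; omega⟩, p.2) q

/-- A real matrix viewed as a constant matrix polynomial. -/
def liftC {m m' : Type*} (A : Matrix m m' ℝ) : Matrix m m' (Polynomial ℝ) :=
  A.map C

/-- Block transpose of a matrix consisting of `n × n` blocks: block `(i,j)` of `A^𝓑`
is block `(j,i)` of `A`. -/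
def blockTr {n k1 k2 : ℕ} {R : Type*} (A : Matrix (Fin k1 × Fin n) (Fin k2 × Fin n) R) :
    Matrix (Fin k2 × Fin n) (Fin k1 × Fin n) R :=
  Matrix.of fun p q => A (q.1, p.2) (p.1, q.2)

/-- `rev_d Q(λ) = λ^d Q(1/λ)`, entrywise reversal of a matrix polynomial of degree at most `d`. -/
def revMat {m m' : Type*} (d : ℕ) (L : Matrix m m' (Polynomial ℝ)) :
    Matrix m m' (Polynomial ℝ) :=
  Matrix.of fun p q => (L p q).reflect d

/-- Evaluation of a real matrix polynomial at a complex number. -/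
def evalC {m m' : Type*} (α : ℂ) (L : Matrix m m' (Polynomial ℝ)) : Matrix m m' ℂ :=
  Matrix.of fun p q => aeval α (L p q)

/-- A matrix polynomial viewed as a matrix over the field `ℝ(λ)` of rational functions. -/
def liftRat {m m' : Type*} (L : Matrix m m' (Polynomial ℝ)) : Matrix m m' (RatFunc ℝ) :=
  L.map (algebraMap (Polynomial ℝ) (RatFunc ℝ))

/-- `v ⊗ I_n` as a `kn × n` complex matrix. -/
def vKronC (n k : ℕ) (v : Fin k → ℝ) : Matrix (Fin k × Fin n) (Fin n) ℂ :=
  Matrix.of fun p s => if p.2 = s then (v p.1 : ℂ) else 0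

/-- `v ⊗ I_n` as a `kn × n` matrix over `ℝ(λ)`. -/
def vKronRat (n k : ℕ) (v : Fin k → ℝ) : Matrix (Fin k × Fin n) (Fin n) (RatFunc ℝ) :=
  Matrix.of fun p s => if p.2 = s then RatFunc.C (v p.1) else 0

/-- The pencil `Xm λ + Ym` as a matrix polynomial. -/
def pencilPoly {m : Type*} (Xm Ym : Matrix m m ℝ) : Matrix m m (Polynomial ℝ) :=
  Matrix.of fun p q => C (Xm p q) * X + C (Ym p q)

/-- `diag(P(λ), I_{(k-1)n})` as a `kn × kn` matrix polynomial. -/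
def diagPI (n k : ℕ) (Pp : Matrix (Fin n) (Fin n) (Polynomial ℝ)) :
    Matrix (Fin k × Fin n) (Fin k × Fin n) (Polynomial ℝ) :=
  Matrix.of fun p q =>
    if p.1.val = 0 ∧ q.1.val = 0 then Pp p.2 q.2 else if p = q then 1 else 0

/-- `ℒ(λ)` is a linearization of `P(λ)`: there are `U(λ), V(λ)` with nonzero real constant
determinants such that `U(λ)ℒ(λ)V(λ) = diag(P(λ), I_{(k-1)n})`. -/
def IsLinearization (n k : ℕ)
    (L : Matrix (Fin k × Fin n) (Fin k × Fin n) (Polynomial ℝ))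
    (Pp : Matrix (Fin n) (Fin n) (Polynomial ℝ)) : Prop :=
  ∃ U V : Matrix (Fin k × Fin n) (Fin k × Fin n) (Polynomial ℝ),
    (∃ cu : ℝ, cu ≠ 0 ∧ U.det = C cu) ∧ (∃ cv : ℝ, cv ≠ 0 ∧ V.det = C cv) ∧
    U * L * V = diagPI n k Pp

/-- `ℒ(λ)` is a strong linearization of `P(λ)` (of degree `k`): it is a linearization and
`rev₁ ℒ(λ)` is a linearization of `rev_k P(λ)`. -/
def IsStrongLin (n k : ℕ)
    (L : Matrix (Fin k × Fin n) (Fin k × Fin n) (Polynomial ℝ))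
    (Pp : Matrix (Fin n) (Fin n) (Polynomial ℝ)) : Prop :=
  IsLinearization n k L Pp ∧ IsLinearization n k (revMat 1 L) (revMat k Pp)

def mcoef (k : ℕ) (a b c : ℕ → ℝ) (j i : ℕ) : Polynomial ℝ :=
  if i + 1 = j then -C (a (k - 1 - j))
  else if i = j then X - C (b (k - 1 - j))
  else if i = j + 1 then -C (c (k - 1 - j))
  else 0

lemma FPhi_M (n k : ℕ) (a b c : ℕ → ℝ) (Pm : ℕ → Matrix (Fin n) (Fin n) ℝ)
    (p q : Fin k × Fin n) (h : ¬ p.1.val = 0) :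
    FPhi n k a b c Pm p q
      = mcoef k a b c p.1.val q.1.val * (if p.2 = q.2 then 1 else 0) := by
  unfold FPhi mcoef
  simp only [Matrix.of_apply, if_neg h]
section Scalar
variable (a b c : ℕ → ℝ) (ha : ∀ j, a j ≠ 0)
variable (φ : ℕ → Polynomial ℝ) (hφ0 : φ 0 = 1)
variable (hφ1 : C (a 0) * φ 1 = (X - C (b 0)) * φ 0)
variable (hφrec : ∀ j, C (a (j + 1)) * φ (j + 2) =
      (X - C (b (j + 1))) * φ (j + 1) - C (c (j + 1)) * φ j)

include ha hφ0 hφ1 hφrec in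
lemma phi_deg : ∀ j, (φ j).natDegree = j ∧ (φ j).coeff j ≠ 0 := by
  have key : ∀ j, ((φ j).natDegree = j ∧ (φ j).coeff j ≠ 0) ∧
      ((φ (j+1)).natDegree = j+1 ∧ (φ (j+1)).coeff (j+1) ≠ 0) := by
    intro j
    induction j with
    | zero =>
      have h0 : (φ 0).natDegree = 0 ∧ (φ 0).coeff 0 ≠ 0 := by
        rw [hφ0]; simp
      have h1 : φ 1 = C (a 0)⁻¹ * (X - C (b 0)) := by
        have := hφ1
        rw [hφ0, mul_one] at this
        have h2 := congrArg (fun p => C (a 0)⁻¹ * p) this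
        simpa [← mul_assoc, ← C_mul, inv_mul_cancel₀ (ha 0)] using h2
      refine ⟨h0, ?_, ?_⟩
      · rw [h1, natDegree_C_mul (by simpa using inv_ne_zero (ha 0)), natDegree_X_sub_C]
      · rw [h1]
        simp [coeff_C_mul, ha 0]
    | succ j ih =>
      obtain ⟨⟨hd0, hc0⟩, hd, hc⟩ := ih
      refine ⟨⟨hd, hc⟩, ?_⟩
      set R : Polynomial ℝ :=
        (X - C (b (j + 1))) * φ (j + 1) - C (c (j + 1)) * φ j with hR
      have hphi : φ (j+2) = C (a (j+1))⁻¹ * R := by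
        have h2 := congrArg (fun p => C (a (j+1))⁻¹ * p) (hφrec j)
        simpa [← mul_assoc, ← C_mul, inv_mul_cancel₀ (ha (j+1))] using h2
      have hRdeg : R.natDegree ≤ j + 2 := by
        refine le_trans (natDegree_sub_le _ _) ?_
        simp only [max_le_iff]
        refine ⟨le_trans natDegree_mul_le ?_, le_trans natDegree_mul_le ?_⟩
        · rw [natDegree_X_sub_C, hd]; omega
        · simp [hd0]
      have hRc : R.coeff (j+2) = (φ (j+1)).coeff (j+1) := by
        rw [hR]
        rw [sub_mul, coeff_sub, coeff_sub, coeff_X_mul, coeff_C_mul, coeff_C_mul]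
        rw [coeff_eq_zero_of_natDegree_lt (by omega : (φ (j+1)).natDegree < j+2) ,
            coeff_eq_zero_of_natDegree_lt (by omega : (φ j).natDegree < j+2)]
        ring
      have hc2 : (φ (j+2)).coeff (j+2) ≠ 0 := by
        rw [hphi, coeff_C_mul, hRc]
        exact mul_ne_zero (by simpa using inv_ne_zero (ha (j+1))) hc
      have hle : (φ (j+2)).natDegree ≤ j + 2 := by
        rw [hphi]
        exact le_trans (natDegree_mul_le) (by simpa using hRdeg)
      exact ⟨le_antisymm hle (le_natDegree_of_ne_zero hc2), hc2⟩
  intro j; exact ⟨(key j).1.1, (key j).1.2⟩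
include ha hφ0 hφ1 hφrec in
lemma scalar_ker : ∀ k : ℕ, 1 ≤ k → ∀ d : ℕ → Polynomial ℝ, (∀ i, (d i).degree ≤ 1) →
    (∑ i ∈ Finset.range k, φ (k - 1 - i) * d i = 0) →
    ∃ g : ℕ → ℝ, g 0 = 0 ∧ (∀ j, k ≤ j → g j = 0) ∧
      ∀ i < k, d i = -(C (a (k - 2 - i)) * C (g (i + 1)))
        + (X - C (b (k - 1 - i))) * C (g i) - C (c (k - i)) * C (g (i - 1)) := by
  have hphid := phi_deg a b c ha φ hφ0 hφ1 hφrec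
  intro k
  induction k using Nat.strong_induction_on with
  | _ k IH =>
  intro hk d hdeg hsum
  rcases eq_or_lt_of_le hk with hk1 | hk2
  · -- k = 1
    refine ⟨0, rfl, fun j _ => rfl, ?_⟩
    intro i hi
    have hi0 : i = 0 := by omega
    subst hi0
    have : d 0 = 0 := by
      rw [← hk1] at hsum
      simpa [hφ0] using hsum
    simp [this]
  · -- k ≥ 2
    obtain ⟨k', rfl⟩ : ∃ k', k = k' + 1 := ⟨k - 1, by omega⟩
    have hk' : 1 ≤ k' := by omega
    set k := k' + 1 with hkdef
    -- step 1 : top coefficient of d 0 vanishes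
    have hndeg : ∀ i, (d i).natDegree ≤ 1 := fun i =>
      natDegree_le_iff_degree_le.2 (hdeg i)
    have hco : (d 0).coeff 1 = 0 := by
      have h0 : (∑ i ∈ Finset.range k, φ (k - 1 - i) * d i).coeff k = 0 := by
        rw [hsum]; simp
      rw [finset_sum_coeff] at h0
      have hz : ∀ i ∈ Finset.range k, i ≠ 0 → (φ (k - 1 - i) * d i).coeff k = 0 := by
        intro i hi hne
        apply coeff_eq_zero_of_natDegree_lt
        refine lt_of_le_of_lt (natDegree_mul_le) ?_
        have := hndeg i
        have := (hphid (k - 1 - i)).1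
        simp only [Finset.mem_range] at hi
        omega
      rw [Finset.sum_eq_single 0 (fun i hi hne => hz i hi hne)
        (by intro h; exact absurd (Finset.mem_range.2 (by omega)) h)] at h0
      have hd0 : d 0 = C ((d 0).coeff 1) * X + C ((d 0).coeff 0) :=
        eq_X_add_C_of_degree_le_one (hdeg 0)
      rw [hd0, mul_add, coeff_add, ← mul_assoc] at h0
      rw [mul_comm (φ (k - 1 - 0)) (C ((d 0).coeff 1))] at h0
      rw [coeff_mul_X, coeff_C_mul, mul_comm (φ (k - 1 - 0)) (C ((d 0).coeff 0)),
        coeff_C_mul] at h0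
      have e1 : k - 1 - 0 = k' := by omega
      rw [e1] at h0
      have e2 : (φ k').coeff k = 0 :=
        coeff_eq_zero_of_natDegree_lt (by rw [(hphid k').1]; omega)
      rw [e2, mul_zero, add_zero] at h0
      exact (mul_eq_zero.1 h0).resolve_right (hphid k').2
    have hd0C : d 0 = C ((d 0).coeff 0) := by
      have hd0 : d 0 = C ((d 0).coeff 1) * X + C ((d 0).coeff 0) :=
        eq_X_add_C_of_degree_le_one (hdeg 0)
      rw [hco] at hd0; simpa using hd0
    set y := (d 0).coeff 0 with hy
    set g1 : ℝ := -(y / a (k - 2)) with hg1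
    have hag1 : a (k - 2) * g1 = -y := by
      rw [hg1, mul_neg, mul_div_assoc', mul_comm, mul_div_assoc, div_self (ha (k - 2)),
        mul_one]
    -- step 3 : shifted pencils
    set e : ℕ → Polynomial ℝ := fun i =>
      if i = 0 then d 1 - (X - C (b (k - 2))) * C g1
      else if i = 1 then d 2 + C (c (k - 2)) * C g1
      else d (i + 1) with he
    have hedeg : ∀ i, (e i).degree ≤ 1 := by
      intro i
      rw [he]
      dsimp only
      split_ifs with h1 h2
      · refine le_trans (degree_sub_le _ _) (max_le (hdeg 1) ?_)
        refine le_trans (degree_mul_le _ _) ?_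
        calc (X - C (b (k-2))).degree + (C g1).degree
            ≤ 1 + 0 := add_le_add (degree_X_sub_C_le _) degree_C_le
          _ = 1 := by norm_num
      · refine le_trans (degree_add_le _ _) (max_le (hdeg 2) ?_)
        refine le_trans (degree_mul_le _ _) ?_
        calc (C (c (k-2))).degree + (C g1).degree
            ≤ 0 + 0 := add_le_add degree_C_le degree_C_le
          _ ≤ 1 := by norm_num
      · exact hdeg (i + 1)
    -- step 4 : sum condition for e
    have hesum : ∑ i ∈ Finset.range k', φ (k' - 1 - i) * e i = 0 := by
      have hshift : ∑ i ∈ Finset.range k, φ (k - 1 - i) * d i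
          = (∑ i ∈ Finset.range k', φ (k' - 1 - i) * d (i + 1)) + φ (k - 1) * d 0 := by
        rw [Finset.sum_range_succ']
        congr 1
        refine Finset.sum_congr rfl fun i hi => ?_
        congr 2
        omega
      have hdiff : ∀ i ∈ Finset.range k', φ (k' - 1 - i) * e i
          = φ (k' - 1 - i) * d (i + 1)
            + ((if i = 0 then -(φ (k' - 1) * ((X - C (b (k - 2))) * C g1)) else 0)
             + (if i = 1 then φ (k' - 2) * (C (c (k - 2)) * C g1) else 0)) := by
        intro i hi
        rw [he]
        rcases Nat.eq_zero_or_pos i with h0 | hpos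
        · subst h0; simp; ring
        · rcases Nat.eq_or_lt_of_le hpos with h1 | h2
          · rw [← h1]
            have : k' - 1 - 1 = k' - 2 := by omega
            simp [this]; ring
          · have hne0 : i ≠ 0 := by omega
            have hne1 : i ≠ 1 := by omega
            simp [hne0, hne1]
      rw [Finset.sum_congr rfl hdiff, Finset.sum_add_distrib, Finset.sum_add_distrib,
        Finset.sum_ite_eq' (Finset.range k') 0, Finset.sum_ite_eq' (Finset.range k') 1]
      have h0mem : (0 : ℕ) ∈ Finset.range k' := Finset.mem_range.2 (by omega)
      have hshift' : ∑ i ∈ Finset.range k', φ (k' - 1 - i) * d (i + 1)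
          = -(φ (k - 1) * d 0) := by
        have := hsum
        rw [hshift] at this
        linear_combination this
      rw [if_pos h0mem, hshift']
      rw [hd0C]
      have hCy : (C y : Polynomial ℝ) = -(C (a (k - 2)) * C g1) := by
        rw [← C_mul, hag1]; simp
      rw [hCy]
      rcases Nat.lt_or_ge k' 2 with hklt | hkge
      · -- k' = 1, k = 2
        have hK : k' = 1 := by omega
        have h1mem : (1 : ℕ) ∉ Finset.range k' := by
          simp [hK]
        rw [if_neg h1mem]
        have e1 : k - 1 = 1 := by omega
        have e2 : k - 2 = 0 := by omega
        have e3 : k' - 1 = 0 := by omega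
        rw [e1, e2, e3, hφ0]
        have := hφ1
        rw [hφ0, mul_one] at this
        linear_combination (C g1) * this
      · -- k' ≥ 2, k ≥ 3
        have h1mem : (1 : ℕ) ∈ Finset.range k' := Finset.mem_range.2 (by omega)
        rw [if_pos h1mem]
        obtain ⟨m, hm⟩ : ∃ m, k = m + 3 := ⟨k - 3, by omega⟩
        have e1 : k - 1 = m + 2 := by omega
        have e2 : k - 2 = m + 1 := by omega
        have e3 : k' - 1 = m + 1 := by omega
        have e4 : k' - 2 = m := by omega
        rw [e1, e2, e3, e4]
        linear_combination (C g1) * (hφrec m)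
    obtain ⟨g'', hg''0, hg''k, hg''d⟩ := IH k' (by omega) hk' e hedeg hesum
    set g : ℕ → ℝ := fun j => if j = 0 then 0 else if j = 1 then g1 else g'' (j - 1)
      with hgdef
    refine ⟨g, by simp [hgdef], ?_, ?_⟩
    · intro j hj
      have hj2 : j ≠ 0 ∧ j ≠ 1 := by omega
      simp only [hgdef, if_neg hj2.1, if_neg hj2.2]
      exact hg''k (j - 1) (by omega)
    · intro i hi
      have hg0 : g 0 = 0 := by simp [hgdef]
      have hgone : g 1 = g1 := by simp [hgdef]
      rcases Nat.eq_zero_or_pos i with h0 | hpos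
      · subst h0
        have hz : (0 : ℕ) - 1 = 0 := rfl
        rw [hz, hg0, hgone, hd0C]
        have e0 : k - 2 - 0 = k - 2 := by omega
        rw [e0, show (C y : Polynomial ℝ) = -(C (a (k - 2)) * C g1) by
          rw [← C_mul, hag1]; simp]
        simp
      rcases Nat.eq_or_lt_of_le hpos with h1 | h2
      · -- i = 1
        obtain rfl : i = 1 := by omega
        have hE := hg''d 0 (by omega)
        rw [hg''0] at hE
        simp only [C_0, mul_zero, sub_zero, add_zero, zero_mul, neg_zero] at hE
        have hE0 : e 0 = d 1 - (X - C (b (k - 2))) * C g1 := by simp [he]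
        rw [hE0] at hE
        have hg2 : g 2 = g'' 1 := by simp [hgdef]
        have e1 : k - 2 - 1 = k' - 2 - 0 := by omega
        have e2 : k - 1 - 1 = k - 2 := by omega
        rw [e1, e2, hg2, hgone, hg0]
        simp only [C_0, mul_zero, sub_zero]
        linear_combination hE
      rcases Nat.eq_or_lt_of_le h2 with h22 | h3
      · -- i = 2
        obtain rfl : i = 2 := by omega
        have hE := hg''d 1 (by omega)
        rw [hg''0] at hE
        simp only [C_0, mul_zero, sub_zero, add_zero, zero_mul, neg_zero] at hE
        have hE1 : e 1 = d 2 + C (c (k - 2)) * C g1 := by rw [he]; simp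
        rw [hE1] at hE
        have hg3 : g 3 = g'' 2 := by simp [hgdef]
        have hg2 : g 2 = g'' 1 := by simp [hgdef]
        have e1 : k - 2 - 2 = k' - 2 - 1 := by omega
        have e2 : k - 1 - 2 = k' - 1 - 1 := by omega
        have e3 : k - 2 = k' - 1 := by omega
        rw [e3] at hE
        rw [e1, e2, hg3, hg2, hgone, e3]
        linear_combination hE
      · -- i ≥ 3
        have hE := hg''d (i - 1) (by omega)
        have hEi : e (i - 1) = d i := by
          rw [he]
          have h1 : i - 1 ≠ 0 := by omega
          have h2 : i - 1 ≠ 1 := by omega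
          have h3 : i - 1 + 1 = i := by omega
          simp [h1, h2, h3]
        rw [hEi] at hE
        have hga : g (i + 1) = g'' (i - 1 + 1) := by
          have : i + 1 ≠ 0 := by omega
          have h2 : i + 1 ≠ 1 := by omega
          have h3 : i + 1 - 1 = i - 1 + 1 := by omega
          simp only [hgdef, if_neg this, if_neg h2, h3]
        have hgb : g i = g'' (i - 1) := by
          have h1 : i ≠ 0 := by omega
          have h2 : i ≠ 1 := by omega
          simp only [hgdef, if_neg h1, if_neg h2]
        have hgc : g (i - 1) = g'' (i - 1 - 1) := by
          have h1 : i - 1 ≠ 0 := by omega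
          have h2 : i - 1 ≠ 1 := by omega
          simp only [hgdef, if_neg h1, if_neg h2]
        have e1 : k - 2 - i = k' - 2 - (i - 1) := by omega
        have e2 : k - 1 - i = k' - 1 - (i - 1) := by omega
        have e3 : k - i = k' - (i - 1) := by omega
        rw [e1, e2, e3, hga, hgb, hgc]
        exact hE

include hφ0 hφ1 hφrec in
lemma mc_phi_sum (k2 : ℕ) (j : ℕ) (hj1 : 1 ≤ j) (hj2 : j < k2 + 2) :
    ∑ i ∈ Finset.range (k2 + 2), φ (k2 + 1 - i) * mcoef (k2 + 2) a b c j i = 0 := by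
  have hpt : ∀ i ∈ Finset.range (k2 + 2), φ (k2 + 1 - i) * mcoef (k2 + 2) a b c j i =
      ((if i = j - 1 then φ (k2 + 2 - j) * -C (a (k2 + 1 - j)) else 0)
      + (if i = j then φ (k2 + 1 - j) * (X - C (b (k2 + 1 - j))) else 0))
      + (if i = j + 1 then φ (k2 - j) * -C (c (k2 + 1 - j)) else 0) := by
    intro i hi
    unfold mcoef
    have eidx : k2 + 2 - 1 - j = k2 + 1 - j := by omega
    by_cases h1 : i = j - 1
    · rw [if_pos (by omega : i + 1 = j), if_pos h1, if_neg (by omega : ¬ i = j),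
        if_neg (by omega : ¬ i = j + 1), eidx]
      have : k2 + 1 - i = k2 + 2 - j := by omega
      rw [this]
      ring
    · by_cases h2 : i = j
      · rw [if_neg (by omega : ¬ i + 1 = j), if_pos h2, if_pos h2,
          if_neg (by omega : ¬ i = j - 1), if_neg (by omega : ¬ i = j + 1), eidx]
        have : k2 + 1 - i = k2 + 1 - j := by omega
        rw [this]
        ring
      · by_cases h3 : i = j + 1
        · rw [if_neg (by omega : ¬ i + 1 = j), if_neg h2, if_pos h3, if_pos h3,
            if_neg h1, if_neg h2, eidx]
          have : k2 + 1 - i = k2 - j := by omega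
          rw [this]
          ring
        · rw [if_neg (by omega : ¬ i + 1 = j), if_neg h2, if_neg h3, if_neg h1,
            if_neg h2, if_neg h3]
          ring
  rw [Finset.sum_congr rfl hpt, Finset.sum_add_distrib, Finset.sum_add_distrib,
    Finset.sum_ite_eq' (Finset.range (k2 + 2)) (j - 1),
    Finset.sum_ite_eq' (Finset.range (k2 + 2)) j,
    Finset.sum_ite_eq' (Finset.range (k2 + 2)) (j + 1),
    if_pos (Finset.mem_range.2 (by omega)), if_pos (Finset.mem_range.2 (by omega))]
  by_cases hj : j = k2 + 1
  · rw [if_neg (by simp [hj])]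
    subst hj
    have e1 : k2 + 2 - (k2 + 1) = 1 := by omega
    have e2 : k2 + 1 - (k2 + 1) = 0 := by omega
    rw [e1, e2]
    linear_combination (-1 : Polynomial ℝ) * hφ1
  · rw [if_pos (Finset.mem_range.2 (by omega))]
    obtain ⟨t, ht⟩ : ∃ t, k2 + 1 - j = t + 1 := ⟨k2 - j, by omega⟩
    have e1 : k2 + 2 - j = t + 2 := by omega
    have e2 : k2 - j = t := by omega
    rw [e1, ht, e2]
    linear_combination (-1 : Polynomial ℝ) * hφrec t

include ha hφ0 hφ1 hφrec in
lemma phiT_FB (n k2 : ℕ) (Pm : ℕ → Matrix (Fin n) (Fin n) ℝ) :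
    (PhiMat n (k2+2) φ)ᵀ * blockTr (FPhi n (k2+2) a b c Pm)
      = Matrix.of (fun (s : Fin n) (q : Fin (k2+2) × Fin n) =>
          if q.1.val = 0 then matP n (k2+2) φ Pm s q.2 else 0) := by
  refine Matrix.ext fun s q => ?_
  rw [Matrix.mul_apply, Fintype.sum_prod_type]
  have hin : ∀ i : Fin (k2+2),
      (∑ r : Fin n, (PhiMat n (k2+2) φ)ᵀ s (i, r)
        * blockTr (FPhi n (k2+2) a b c Pm) (i, r) q)
      = φ (k2 + 1 - i.val) * FPhi n (k2+2) a b c Pm (q.1, s) (i, q.2) := by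
    intro i
    have hr : ∀ r : Fin n, (PhiMat n (k2+2) φ)ᵀ s (i, r)
        * blockTr (FPhi n (k2+2) a b c Pm) (i, r) q
        = if r = s then φ (k2 + 1 - i.val) * FPhi n (k2+2) a b c Pm (q.1, r) (i, q.2)
          else 0 := by
      intro r
      simp only [Matrix.transpose_apply, PhiMat, blockTr, Matrix.of_apply]
      by_cases h : r = s
      · subst h
        rw [if_pos rfl, if_pos rfl]
        have e : k2 + 2 - 1 - i.val = k2 + 1 - i.val := by omega
        rw [e]
      · rw [if_neg h, if_neg h, zero_mul]
    rw [Finset.sum_congr rfl (fun r _ => hr r),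
      Finset.sum_ite_eq' Finset.univ s
        (fun r => φ (k2 + 1 - i.val) * FPhi n (k2+2) a b c Pm (q.1, r) (i, q.2)),
      if_pos (Finset.mem_univ s)]
  rw [Finset.sum_congr rfl (fun i _ => hin i), Matrix.of_apply]
  by_cases hq : q.1.val = 0
  · rw [if_pos hq]
    set f : ℕ → Polynomial ℝ := fun i => if h : i < k2 + 2 then
        φ (k2 + 1 - i) * FPhi n (k2+2) a b c Pm (q.1, s) (⟨i, h⟩, q.2) else 0 with hfdef
    have hconv : (∑ i : Fin (k2+2),
        φ (k2 + 1 - i.val) * FPhi n (k2+2) a b c Pm (q.1, s) (i, q.2))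
        = ∑ i ∈ Finset.range (k2+2), f i := by
      rw [← Fin.sum_univ_eq_sum_range f (k2+2)]
      refine Finset.sum_congr rfl fun i _ => ?_
      rw [hfdef]
      simp only [dif_pos i.isLt, Fin.eta]
    rw [hconv, Finset.sum_range_succ', Finset.sum_range_succ']
    have hf0 : f 0 = φ (k2+1) * (C ((a (k2+1))⁻¹) * (X - C (b (k2+1)))
        * C (Pm (k2+2) s q.2) + C (Pm (k2+1) s q.2)) := by
      simp only [hfdef]
      rw [dif_pos (by omega : 0 < k2 + 2)]
      unfold FPhi
      simp only [Matrix.of_apply]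
      rw [if_pos hq]
      norm_num
    have hf1 : f 1 = φ k2 * (C (Pm k2 s q.2)
        - C (c (k2+1) / a (k2+1)) * C (Pm (k2+2) s q.2)) := by
      simp only [hfdef]
      rw [dif_pos (by omega : 1 < k2 + 2)]
      unfold FPhi
      simp only [Matrix.of_apply]
      rw [if_pos hq]
      norm_num
    have hftail : ∀ i ∈ Finset.range k2, f (i + 1 + 1)
        = φ (k2 - 1 - i) * C (Pm (k2 - 1 - i) s q.2) := by
      intro i hi
      have hik : i < k2 := Finset.mem_range.1 hi
      simp only [hfdef]
      rw [dif_pos (by omega : i + 1 + 1 < k2 + 2)]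
      unfold FPhi
      simp only [Matrix.of_apply]
      rw [if_pos hq, if_neg (by omega), if_neg (by omega)]
      have e1 : k2 + 1 - (i + 1 + 1) = k2 - 1 - i := by omega
      have e2 : k2 + 2 - 1 - (i + 1 + 1) = k2 - 1 - i := by omega
      rw [e1, e2]
    rw [hf0, hf1, Finset.sum_congr rfl hftail]
    have hrefl : ∑ i ∈ Finset.range k2, φ (k2 - 1 - i) * C (Pm (k2 - 1 - i) s q.2)
        = ∑ i ∈ Finset.range k2, C (Pm i s q.2) * φ i := by
      rw [show (∑ i ∈ Finset.range k2, φ (k2 - 1 - i) * C (Pm (k2 - 1 - i) s q.2))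
          = ∑ i ∈ Finset.range k2, (fun m => φ m * C (Pm m s q.2)) (k2 - 1 - i) from rfl]
      rw [Finset.sum_range_reflect (fun m => φ m * C (Pm m s q.2)) k2]
      exact Finset.sum_congr rfl fun i _ => mul_comm _ _
    rw [hrefl]
    unfold matP
    simp only [Matrix.of_apply]
    rw [Finset.sum_range_succ, Finset.sum_range_succ, Finset.sum_range_succ]
    have hphik : φ (k2 + 2) = C ((a (k2+1))⁻¹)
        * ((X - C (b (k2+1))) * φ (k2+1) - C (c (k2+1)) * φ k2) := by
      have h2 := congrArg (fun p => C ((a (k2+1))⁻¹) * p) (hφrec k2)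
      simpa [← mul_assoc, ← C_mul, inv_mul_cancel₀ (ha (k2+1))] using h2
    have hdiv : C (c (k2+1) / a (k2+1)) = C (c (k2+1)) * C ((a (k2+1))⁻¹) := by
      rw [div_eq_mul_inv, C_mul]
    rw [hdiv, hphik]
    ring
  · rw [if_neg hq]
    have hpt : ∀ i : Fin (k2+2),
        φ (k2 + 1 - i.val) * FPhi n (k2+2) a b c Pm (q.1, s) (i, q.2)
        = (φ (k2 + 1 - i.val) * mcoef (k2+2) a b c q.1.val i.val)
          * (if s = q.2 then 1 else 0) := by
      intro i
      rw [FPhi_M n (k2+2) a b c Pm (q.1, s) (i, q.2) hq]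
      ring
    rw [Finset.sum_congr rfl (fun i _ => hpt i), ← Finset.sum_mul]
    rw [Fin.sum_univ_eq_sum_range
      (fun i => φ (k2 + 1 - i) * mcoef (k2+2) a b c q.1.val i) (k2+2)]
    rw [mc_phi_sum a b c φ hφ0 hφ1 hφrec k2 q.1.val (by omega) q.1.isLt, zero_mul]

end Scalar
lemma mc_sum (k : ℕ) (a b c : ℕ → ℝ) (hk : 2 ≤ k) (i : ℕ) (hi : i < k) (g : ℕ → ℝ)
    (hg0 : g 0 = 0) (hgk : ∀ j, k ≤ j → g j = 0) :
    ∑ j ∈ Finset.range (k - 1), mcoef k a b c (j + 1) i * C (g (j + 1))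
      = -(C (a (k - 2 - i)) * C (g (i + 1))) + (X - C (b (k - 1 - i))) * C (g i)
        - C (c (k - i)) * C (g (i - 1)) := by
  have hpt : ∀ j ∈ Finset.range (k - 1), mcoef k a b c (j + 1) i * C (g (j + 1)) =
      ((if j = i then -(C (a (k - 2 - i)) * C (g (i + 1))) else 0)
      + (if j = i - 1 ∧ 1 ≤ i then (X - C (b (k - 1 - i))) * C (g i) else 0))
      + (if j = i - 2 ∧ 2 ≤ i then -(C (c (k - i)) * C (g (i - 1))) else 0) := by
    intro j hj
    unfold mcoef
    by_cases h1 : j = i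
    · subst h1
      rw [if_pos rfl, if_pos rfl]
      rw [if_neg (by omega : ¬ (j = j - 1 ∧ 1 ≤ j)), if_neg (by omega : ¬ (j = j - 2 ∧ 2 ≤ j))]
      have e1 : k - 1 - (j + 1) = k - 2 - j := by omega
      rw [e1]
      ring
    · by_cases h2 : j = i - 1 ∧ 1 ≤ i
      · have hij : i = j + 1 := by omega
        rw [if_neg (by omega), if_pos hij]
        rw [if_pos h2, if_neg (by omega : ¬ (j = i - 2 ∧ 2 ≤ i)), if_neg h1]
        have e1 : k - 1 - (j + 1) = k - 1 - i := by omega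
        have e2 : j + 1 = i := by omega
        rw [e1, e2]
        ring
      · by_cases h3 : j = i - 2 ∧ 2 ≤ i
        · have hij : i = j + 1 + 1 := by omega
          rw [if_neg (by omega), if_neg (by omega), if_pos hij, if_neg h1,
            if_neg h2, if_pos h3]
          have e1 : k - 1 - (j + 1) = k - i := by omega
          have e2 : j + 1 = i - 1 := by omega
          rw [e1, e2]
          ring
        · rw [if_neg (by omega), if_neg (by omega), if_neg (by omega), if_neg h1,
            if_neg h2, if_neg h3]
          ring
  rw [Finset.sum_congr rfl hpt, Finset.sum_add_distrib, Finset.sum_add_distrib,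
    Finset.sum_ite_eq' (Finset.range (k - 1)) i]
  have hA : (if i ∈ Finset.range (k - 1) then -(C (a (k - 2 - i)) * C (g (i + 1))) else 0)
      = -(C (a (k - 2 - i)) * C (g (i + 1))) := by
    by_cases hmem : i ∈ Finset.range (k - 1)
    · rw [if_pos hmem]
    · rw [if_neg hmem]
      have : g (i + 1) = 0 := by
        apply hgk
        simp only [Finset.mem_range] at hmem
        omega
      rw [this]
      simp
  rw [hA]
  have hB : (∑ j ∈ Finset.range (k - 1), if j = i - 1 ∧ 1 ≤ i
        then (X - C (b (k - 1 - i))) * C (g i) else 0)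
      = (X - C (b (k - 1 - i))) * C (g i) := by
    by_cases hi1 : 1 ≤ i
    · have : ∀ j ∈ Finset.range (k - 1), (if j = i - 1 ∧ 1 ≤ i
          then (X - C (b (k - 1 - i))) * C (g i) else 0)
          = (if j = i - 1 then (X - C (b (k - 1 - i))) * C (g i) else 0) := by
        intro j hj
        by_cases h : j = i - 1
        · rw [if_pos ⟨h, hi1⟩, if_pos h]
        · rw [if_neg (by tauto), if_neg h]
      rw [Finset.sum_congr rfl this, Finset.sum_ite_eq' (Finset.range (k - 1)) (i - 1),
        if_pos (Finset.mem_range.2 (by omega))]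
    · have h0 : i = 0 := by omega
      subst h0
      simp [hg0]
  rw [hB]
  have hCs : (∑ j ∈ Finset.range (k - 1), if j = i - 2 ∧ 2 ≤ i
        then -(C (c (k - i)) * C (g (i - 1))) else 0)
      = -(C (c (k - i)) * C (g (i - 1))) := by
    by_cases hi2 : 2 ≤ i
    · have : ∀ j ∈ Finset.range (k - 1), (if j = i - 2 ∧ 2 ≤ i
          then -(C (c (k - i)) * C (g (i - 1))) else 0)
          = (if j = i - 2 then -(C (c (k - i)) * C (g (i - 1))) else 0) := by
        intro j hj
        by_cases h : j = i - 2
        · rw [if_pos ⟨h, hi2⟩, if_pos h]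
        · rw [if_neg (by tauto), if_neg h]
      rw [Finset.sum_congr rfl this, Finset.sum_ite_eq' (Finset.range (k - 1)) (i - 2),
        if_pos (Finset.mem_range.2 (by omega))]
    · have hg' : g (i - 1) = 0 := by
        have : i - 1 = 0 := by omega
        rw [this, hg0]
      rw [hg']
      simp
  rw [hCs]
  ring
lemma row_mul (n k2 : ℕ) (Pp : Matrix (Fin n) (Fin n) (Polynomial ℝ))
    (v : Fin (k2+2) → ℝ) (Bb : Matrix (Fin (k2+1) × Fin n) (Fin (k2+2) × Fin n) ℝ) :
    (Matrix.of fun (s : Fin n) (q : Fin (k2+2) × Fin n) =>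
        if q.1.val = 0 then Pp s q.2 else 0) * liftC (extRows n (k2+2) v Bb)
      = vKronRow n (k2+2) v Pp := by
  refine Matrix.ext fun s q => ?_
  rw [Matrix.mul_apply, Fintype.sum_prod_type, Fin.sum_univ_succ]
  have htail : ∀ j1 : Fin (k2+1), (∑ j2 : Fin n,
      (Matrix.of fun (s : Fin n) (q : Fin (k2+2) × Fin n) =>
        if q.1.val = 0 then Pp s q.2 else 0) s (j1.succ, j2)
        * liftC (extRows n (k2+2) v Bb) (j1.succ, j2) q) = 0 := by
    intro j1
    refine Finset.sum_eq_zero fun j2 _ => ?_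
    rw [Matrix.of_apply, if_neg (by simp [Fin.val_succ]), zero_mul]
  rw [Finset.sum_congr rfl (fun j1 _ => htail j1), Finset.sum_const_zero, add_zero]
  have h0 : ∀ j2 : Fin n,
      (Matrix.of fun (s : Fin n) (q : Fin (k2+2) × Fin n) =>
        if q.1.val = 0 then Pp s q.2 else 0) s ((0 : Fin (k2+2)), j2)
        * liftC (extRows n (k2+2) v Bb) ((0 : Fin (k2+2)), j2) q
      = if j2 = q.2 then Pp s j2 * C (v q.1) else 0 := by
    intro j2
    simp only [Matrix.of_apply, liftC, extRows, Matrix.map_apply]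
    rw [if_pos (show ((0 : Fin (k2+2)) : ℕ) = 0 from rfl),
      dif_pos (show ((0 : Fin (k2+2)) : ℕ) = 0 from rfl)]
    by_cases h : j2 = q.2
    · rw [if_pos h, if_pos h]
    · rw [if_neg h, if_neg h, C_0, mul_zero]
  rw [Finset.sum_congr rfl (fun j2 _ => h0 j2),
    Finset.sum_ite_eq' Finset.univ q.2 (fun j2 => Pp s j2 * C (v q.1)),
    if_pos (Finset.mem_univ _)]
  unfold vKronRow
  rw [Matrix.of_apply]
  ring

lemma FB_mul_entry (n k2 : ℕ) (a b c : ℕ → ℝ) (Pm : ℕ → Matrix (Fin n) (Fin n) ℝ)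
    (v : Fin (k2+2) → ℝ) (Bb : Matrix (Fin (k2+1) × Fin n) (Fin (k2+2) × Fin n) ℝ)
    (p q : Fin (k2+2) × Fin n) :
    (blockTr (FPhi n (k2+2) a b c Pm) * liftC (extRows n (k2+2) v Bb)) p q
      = C (v q.1) * FPhi n (k2+2) a b c Pm ((0 : Fin (k2+2)), p.2) (p.1, q.2)
        + ∑ j1 : Fin (k2+1),
            mcoef (k2+2) a b c (j1.val+1) p.1.val * C (Bb (j1, p.2) q) := by
  rw [Matrix.mul_apply, Fintype.sum_prod_type, Fin.sum_univ_succ]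
  congr 1
  · have h : ∀ j2 : Fin n, blockTr (FPhi n (k2+2) a b c Pm) p ((0 : Fin (k2+2)), j2)
        * liftC (extRows n (k2+2) v Bb) ((0 : Fin (k2+2)), j2) q
        = if j2 = q.2
          then FPhi n (k2+2) a b c Pm ((0 : Fin (k2+2)), p.2) (p.1, j2) * C (v q.1)
          else 0 := by
      intro j2
      simp only [blockTr, liftC, extRows, Matrix.of_apply, Matrix.map_apply]
      rw [dif_pos (show ((0 : Fin (k2+2)) : ℕ) = 0 from rfl)]
      by_cases h : j2 = q.2
      · rw [if_pos h, if_pos h]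
      · rw [if_neg h, if_neg h, C_0, mul_zero]
    rw [Finset.sum_congr rfl (fun j2 _ => h j2),
      Finset.sum_ite_eq' Finset.univ q.2
        (fun j2 => FPhi n (k2+2) a b c Pm ((0 : Fin (k2+2)), p.2) (p.1, j2) * C (v q.1)),
      if_pos (Finset.mem_univ _)]
    ring
  · refine Finset.sum_congr rfl fun j1 _ => ?_
    have hne : ¬ ((j1.succ : Fin (k2+2)) : ℕ) = 0 := by simp [Fin.val_succ]
    have h : ∀ j2 : Fin n, blockTr (FPhi n (k2+2) a b c Pm) p (j1.succ, j2)
        * liftC (extRows n (k2+2) v Bb) (j1.succ, j2) q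
        = if p.2 = j2
          then mcoef (k2+2) a b c (j1.val+1) p.1.val * C (Bb (j1, j2) q)
          else 0 := by
      intro j2
      simp only [blockTr, liftC, extRows, Matrix.of_apply, Matrix.map_apply]
      rw [dif_neg hne]
      rw [FPhi_M n (k2+2) a b c Pm (j1.succ, p.2) (p.1, j2) hne]
      have hfin : (⟨((j1.succ : Fin (k2+2)) : ℕ) - 1,
          by have := (j1.succ : Fin (k2+2)).isLt; omega⟩ : Fin (k2+2-1)) = j1 := by
        apply Fin.ext
        simp [Fin.val_succ]
      rw [hfin]
      have hsv : ((j1.succ : Fin (k2+2)) : ℕ) = j1.val + 1 := rfl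
      rw [hsv]
      by_cases h : p.2 = j2
      · rw [if_pos h, if_pos h, mul_one]
      · rw [if_neg h, if_neg h, mul_zero, zero_mul]
    rw [Finset.sum_congr rfl (fun j2 _ => h j2),
      Finset.sum_ite_eq Finset.univ p.2
        (fun j2 => mcoef (k2+2) a b c (j1.val+1) p.1.val * C (Bb (j1, j2) q)),
      if_pos (Finset.mem_univ _)]

lemma FPhi_deg (n k : ℕ) (a b c : ℕ → ℝ) (Pm : ℕ → Matrix (Fin n) (Fin n) ℝ)
    (p q : Fin k × Fin n) : (FPhi n k a b c Pm p q).degree ≤ 1 := by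
  unfold FPhi
  simp only [Matrix.of_apply]
  split_ifs <;> compute_degree <;> norm_num
theorem statement_1
    (n k : ℕ) (hn : 0 < n) (hk : 2 ≤ k)
    (a b c : ℕ → ℝ) (ha : ∀ j, a j ≠ 0)
    (φ : ℕ → Polynomial ℝ) (hφ0 : φ 0 = 1)
    (hφ1 : C (a 0) * φ 1 = (X - C (b 0)) * φ 0)
    (hφrec : ∀ j, C (a (j + 1)) * φ (j + 2) =
      (X - C (b (j + 1))) * φ (j + 1) - C (c (j + 1)) * φ j)
    (Pm : ℕ → Matrix (Fin n) (Fin n) ℝ) (hPk : Pm k ≠ 0)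
    (L : Matrix (Fin k × Fin n) (Fin k × Fin n) (Polynomial ℝ)) (hL : IsPencil L) (v : Fin k → ℝ) :
    Ansatz2 n k φ Pm L v ↔
      ∃ B : Matrix (Fin k × Fin n) (Fin (k - 1) × Fin n) ℝ,
        L = blockTr (FPhi n k a b c Pm) * liftC (extRows n k v (blockTr B)) := by
  obtain ⟨k2, rfl⟩ : ∃ k2, k = k2 + 2 := ⟨k - 2, by omega⟩
  constructor
  · intro hA
    have hA' : (PhiMat n (k2+2) φ)ᵀ * L = vKronRow n (k2+2) v (matP n (k2+2) φ Pm) := hA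
    set Bb0 : Matrix (Fin (k2+1) × Fin n) (Fin (k2+2) × Fin n) ℝ := 0 with hBb0def
    set L0 : Matrix (Fin (k2+2) × Fin n) (Fin (k2+2) × Fin n) (Polynomial ℝ) :=
      blockTr (FPhi n (k2+2) a b c Pm) * liftC (extRows n (k2+2) v Bb0) with hL0def
    have hAnsatz0 : (PhiMat n (k2+2) φ)ᵀ * L0
        = vKronRow n (k2+2) v (matP n (k2+2) φ Pm) := by
      rw [hL0def, ← Matrix.mul_assoc, phiT_FB a b c ha φ hφ0 hφ1 hφrec n k2 Pm, row_mul]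
    have hD : (PhiMat n (k2+2) φ)ᵀ * (L - L0) = 0 := by
      rw [Matrix.mul_sub, hA', hAnsatz0, sub_self]
    have hL0deg : ∀ p q, (L0 p q).degree ≤ 1 := by
      intro p q
      rw [hL0def, FB_mul_entry n k2 a b c Pm v Bb0 p q]
      have hz : (∑ j1 : Fin (k2+1),
          mcoef (k2+2) a b c (j1.val+1) p.1.val * C (Bb0 (j1, p.2) q)) = 0 := by
        simp [hBb0def]
      rw [hz, add_zero]
      refine le_trans (degree_mul_le _ _) ?_
      calc (C (v q.1)).degree
            + (FPhi n (k2+2) a b c Pm ((0 : Fin (k2+2)), p.2) (p.1, q.2)).degree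
          ≤ 0 + 1 := add_le_add degree_C_le (FPhi_deg n (k2+2) a b c Pm _ _)
        _ = 1 := by norm_num
    have hinD : ∀ (s : Fin n) (q1 : Fin (k2+2)) (q2 : Fin n) (i : Fin (k2+2)),
        (∑ r : Fin n, (PhiMat n (k2+2) φ)ᵀ s (i, r) * (L - L0) (i, r) (q1, q2))
        = φ (k2 + 1 - i.val) * (L - L0) (i, s) (q1, q2) := by
      intro s q1 q2 i
      have hr : ∀ r : Fin n, (PhiMat n (k2+2) φ)ᵀ s (i, r) * (L - L0) (i, r) (q1, q2)
          = if r = s then φ (k2 + 1 - i.val) * (L - L0) (i, r) (q1, q2) else 0 := by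
        intro r
        simp only [Matrix.transpose_apply, PhiMat, Matrix.of_apply]
        by_cases h : r = s
        · subst h
          rw [if_pos rfl, if_pos rfl]
          have e : k2 + 2 - 1 - i.val = k2 + 1 - i.val := by omega
          rw [e]
        · rw [if_neg h, if_neg h, zero_mul]
      rw [Finset.sum_congr rfl (fun r _ => hr r),
        Finset.sum_ite_eq' Finset.univ s
          (fun r => φ (k2 + 1 - i.val) * (L - L0) (i, r) (q1, q2)),
        if_pos (Finset.mem_univ s)]
    have hex : ∀ (s : Fin n) (q1 : Fin (k2+2)) (q2 : Fin n), ∃ g : ℕ → ℝ,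
        g 0 = 0 ∧ (∀ j, k2 + 2 ≤ j → g j = 0) ∧
        ∀ i < k2 + 2,
          (if h : i < k2 + 2 then (L - L0) (⟨i, h⟩, s) (q1, q2) else 0)
          = -(C (a (k2 + 2 - 2 - i)) * C (g (i + 1)))
            + (X - C (b (k2 + 2 - 1 - i))) * C (g i)
            - C (c (k2 + 2 - i)) * C (g (i - 1)) := by
      intro s q1 q2
      refine scalar_ker a b c ha φ hφ0 hφ1 hφrec (k2+2) (by omega)
        (fun i => if h : i < k2 + 2 then (L - L0) (⟨i, h⟩, s) (q1, q2) else 0) ?_ ?_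
      · intro i
        show (if h : i < k2 + 2 then (L - L0) (⟨i, h⟩, s) (q1, q2) else 0).degree ≤ 1
        by_cases h : i < k2 + 2
        · rw [dif_pos h]
          have hsub : (L - L0) (⟨i, h⟩, s) (q1, q2)
              = L (⟨i, h⟩, s) (q1, q2) - L0 (⟨i, h⟩, s) (q1, q2) := rfl
          rw [hsub]
          exact le_trans (degree_sub_le _ _) (max_le (hL _ _) (hL0deg _ _))
        · rw [dif_neg h]
          simp
      · have h0 : ((PhiMat n (k2+2) φ)ᵀ * (L - L0)) s (q1, q2) = 0 := by
          rw [hD]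
          simp
        rw [Matrix.mul_apply, Fintype.sum_prod_type,
          Finset.sum_congr rfl (fun i _ => hinD s q1 q2 i)] at h0
        have hcv : (∑ i ∈ Finset.range (k2 + 2), φ (k2 + 2 - 1 - i)
              * (if h : i < k2 + 2 then (L - L0) (⟨i, h⟩, s) (q1, q2) else 0))
            = ∑ i : Fin (k2+2), φ (k2 + 1 - i.val) * (L - L0) (i, s) (q1, q2) := by
          rw [← Fin.sum_univ_eq_sum_range (fun i => φ (k2 + 2 - 1 - i)
            * (if h : i < k2 + 2 then (L - L0) (⟨i, h⟩, s) (q1, q2) else 0)) (k2+2)]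
          refine Finset.sum_congr rfl fun i _ => ?_
          rw [dif_pos i.isLt]
          have e : k2 + 2 - 1 - (i : ℕ) = k2 + 1 - (i : ℕ) := by omega
          rw [e]
        exact hcv.trans h0
    choose g hg0 hgk hgd using hex
    set Bmat : Matrix (Fin (k2+2) × Fin n) (Fin (k2+2-1) × Fin n) ℝ :=
      Matrix.of (fun p r => g p.2 p.1 r.2 (r.1.val + 1)) with hBmatdef
    refine ⟨Bmat, ?_⟩
    refine Matrix.ext fun p q => ?_
    have hFB := FB_mul_entry n k2 a b c Pm v (blockTr Bmat) p q
    rw [hFB]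
    have hBbval : ∀ j1 : Fin (k2+1), blockTr Bmat (j1, p.2) q
        = g p.2 q.1 q.2 (j1.val + 1) := by
      intro j1
      simp only [hBmatdef, blockTr, Matrix.of_apply]
    have hs2 : (∑ j1 : Fin (k2+1),
          mcoef (k2+2) a b c (j1.val+1) p.1.val * C (blockTr Bmat (j1, p.2) q))
        = ∑ j ∈ Finset.range (k2+1),
          mcoef (k2+2) a b c (j+1) p.1.val * C (g p.2 q.1 q.2 (j+1)) := by
      rw [Finset.sum_congr rfl (fun j1 _ => by rw [hBbval j1])]
      exact Fin.sum_univ_eq_sum_range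
        (fun j => mcoef (k2+2) a b c (j+1) p.1.val * C (g p.2 q.1 q.2 (j+1))) (k2+1)
    have hmc : (∑ j ∈ Finset.range (k2+1),
          mcoef (k2+2) a b c (j+1) p.1.val * C (g p.2 q.1 q.2 (j+1)))
        = -(C (a (k2 + 2 - 2 - p.1.val)) * C (g p.2 q.1 q.2 (p.1.val + 1)))
          + (X - C (b (k2 + 2 - 1 - p.1.val))) * C (g p.2 q.1 q.2 p.1.val)
          - C (c (k2 + 2 - p.1.val)) * C (g p.2 q.1 q.2 (p.1.val - 1)) :=
      mc_sum (k2+2) a b c (by omega) p.1.val p.1.isLt (g p.2 q.1 q.2)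
        (hg0 p.2 q.1 q.2) (hgk p.2 q.1 q.2)
    have hd := hgd p.2 q.1 q.2 p.1.val p.1.isLt
    have hdf : (if h : p.1.val < k2 + 2 then (L - L0) (⟨p.1.val, h⟩, p.2) (q.1, q.2) else 0)
        = (L - L0) p q := by
      rw [dif_pos p.1.isLt]
    rw [hdf] at hd
    rw [hs2, hmc, ← hd]
    have hL0pq : L0 p q = C (v q.1)
        * FPhi n (k2+2) a b c Pm ((0 : Fin (k2+2)), p.2) (p.1, q.2) := by
      rw [hL0def, FB_mul_entry n k2 a b c Pm v Bb0 p q]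
      simp [hBb0def]
    rw [← hL0pq]
    have hsub : (L - L0) p q = L p q - L0 p q := rfl
    rw [hsub]
    ring
  · rintro ⟨B, rfl⟩
    show (PhiMat n (k2+2) φ)ᵀ
        * (blockTr (FPhi n (k2+2) a b c Pm) * liftC (extRows n (k2+2) v (blockTr B)))
      = vKronRow n (k2+2) v (matP n (k2+2) φ Pm)
    rw [← Matrix.mul_assoc, phiT_FB a b c ha φ hφ0 hφ1 hφrec n k2 Pm,
      row_mul n k2 (matP n (k2+2) φ Pm) v (blockTr B)]
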